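/- Let D ≥ 1 and consider a complete binary tree of depth D with real split values s_t ≠ 0 at every internal node, and rewards q_t (with q_1 = 1). Then the vector z* ∈ ℝ^{2^{D+1}−1} defined by z*_t = 1 if t lies on the traversal path and z*_t = 0 otherwise is the unique maximizer of Σ_t z_t q_t over all vectors z with z_1 = 1 and z_t ∈ [0,1] for every t. In particular, the relaxed linear program has a unique, integral solution describing the tree traversal. (Lemma 1.) -/

import Mathlib

/-- The traversal path of a binary tree with split values `s`. -/
noncomputable def path (s : ℕ → ℝ) : ℕ → ℕ
  | 0 => 1
  | d + 1 => if s (path s d) < 0 then 2 * path s d else 2 * path s d + 1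

/-- The reward `q_t` (see Lemma 1). -/
noncomputable def reward (s : ℕ → ℝ) : ℕ → ℝ
  | 0 => 0
  | 1 => 1
  | 2 => - s 1
  | 3 => s 1
  | (t + 4) =>
      min (if (t + 4) % 2 = 1 then s ((t + 4) / 2) else - s ((t + 4) / 2))
        (reward s ((t + 4) / 2))
decreasing_by omega

lemma reward_eq (s : ℕ → ℝ) (t : ℕ) (ht : 4 ≤ t) :
    reward s t = min (if t % 2 = 1 then s (t / 2) else - s (t / 2)) (reward s (t / 2)) := by
  obtain ⟨k, rfl⟩ : ∃ k, t = k + 4 := ⟨t - 4, by omega⟩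
  rw [reward]

lemma path_bounds (s : ℕ → ℝ) (d : ℕ) : 2 ^ d ≤ path s d ∧ path s d < 2 ^ (d + 1) := by
  induction d with
  | zero => simp [path]
  | succ d ih =>
    have h : (2:ℕ)^(d+1) = 2 * 2^d := by rw [pow_succ]; ring
    have h2 : (2:ℕ)^(d+2) = 2 * 2^(d+1) := by rw [pow_succ]; ring
    simp only [path]
    split <;> omega

lemma path_div (s : ℕ → ℝ) (d : ℕ) : path s (d + 1) / 2 = path s d := by
  simp only [path]; split <;> omega

lemma key (D : ℕ) (hD : 1 ≤ D) (s : ℕ → ℝ)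
    (hs : ∀ t, 1 ≤ t → t ≤ 2 ^ D - 1 → s t ≠ 0) :
    ∀ d, 1 ≤ d → d ≤ D → ∀ t, 2 ^ d ≤ t → t < 2 ^ (d + 1) →
      (path s d = t → 0 < reward s t) ∧ (path s d ≠ t → reward s t < 0) := by
  intro d
  induction d with
  | zero => omega
  | succ d ih =>
    intro _ hdD t ht1 ht2
    by_cases hd0 : d = 0
    · subst hd0
      have hs1 : s 1 ≠ 0 := hs 1 le_rfl (by
        have : (2:ℕ)^1 ≤ 2^D := Nat.pow_le_pow_right (by norm_num) hD
        omega)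
      norm_num at ht1 ht2
      have ht : t = 2 ∨ t = 3 := by omega
      rcases lt_or_gt_of_ne hs1 with hlt | hgt
      · have hpath : path s 1 = 2 := by simp [path, hlt]
        rcases ht with rfl | rfl <;> simp [hpath, reward] <;> linarith
      · have hpath : path s 1 = 3 := by simp [path, not_lt_of_gt hgt]
        rcases ht with rfl | rfl <;> simp [hpath, reward] <;> linarith
    · have hd1 : 1 ≤ d := by omega
      have e1 : (2:ℕ)^(d+1) = 2 * 2^d := by rw [pow_succ]; ring
      have e2 : (2:ℕ)^(d+2) = 2 * 2^(d+1) := by rw [pow_succ]; ring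
      have hpd : 2 ≤ (2:ℕ)^d := by
        have : (2:ℕ)^1 ≤ 2^d := Nat.pow_le_pow_right (by norm_num) hd1
        simpa using this
      have ht4 : 4 ≤ t := by omega
      have hp1 : 2 ^ d ≤ t / 2 := by omega
      have hp2 : t / 2 < 2 ^ (d + 1) := by omega
      obtain ⟨ihpos, ihneg⟩ := ih hd1 (by omega) (t / 2) hp1 hp2
      rw [reward_eq s t ht4]
      -- s (t/2) ≠ 0 when relevant
      have hint : s (t / 2) ≠ 0 := by
        apply hs
        · omega
        · have : (2:ℕ)^(d+1) ≤ 2^D := Nat.pow_le_pow_right (by norm_num) hdD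
          omega
      have hdiv : path s (d + 1) / 2 = path s d := path_div s d
      by_cases hp : path s d = t / 2
      · have hq : 0 < reward s (t / 2) := ihpos hp
        rcases lt_or_gt_of_ne hint with hlt | hgt
        · -- path goes left: path s (d+1) = 2 * (t/2)
          have hpath : path s (d + 1) = 2 * (t / 2) := by
            simp only [path]; rw [hp] at *; rw [if_pos hlt]
          constructor
          · intro he
            have hmod : t % 2 = 0 := by omega
            rw [if_neg (by omega)]
            exact lt_min (by linarith) hq
          · intro hne
            have : t = 2 * (t / 2) + 1 := by omega
            rw [if_pos (by omega)]
            exact lt_of_le_of_lt (min_le_left _ _) hlt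
        · have hpath : path s (d + 1) = 2 * (t / 2) + 1 := by
            simp only [path]; rw [hp] at *; rw [if_neg (not_lt_of_gt hgt)]
          constructor
          · intro he
            have hmod : t % 2 = 1 := by omega
            rw [if_pos hmod]
            exact lt_min hgt hq
          · intro hne
            have : t = 2 * (t / 2) := by omega
            rw [if_neg (by omega)]
            refine lt_of_le_of_lt (min_le_left _ _) (by linarith)
      · have hq : reward s (t / 2) < 0 := ihneg hp
        constructor
        · intro he
          exfalso; apply hp
          rw [← hdiv, he]
        · intro _
          exact lt_of_le_of_lt (min_le_right _ _) hq

open Classical in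
/-- Lemma 1: the indicator vector `z*` of the traversal path is feasible for the
relaxed linear program (`z 1 = 1`, `z t ∈ [0,1]`), and it is the unique maximizer
of `∑_t z_t q_t` over all feasible `z`; in particular the relaxed LP has a unique,
integral solution describing the tree traversal. -/
theorem stmt_1 (D : ℕ) (hD : 1 ≤ D) (s : ℕ → ℝ)
    (hs : ∀ t, 1 ≤ t → t ≤ 2 ^ D - 1 → s t ≠ 0)
    (zstar : ℕ → ℝ)
    (hzstar : ∀ t, zstar t = if ∃ d ≤ D, path s d = t then (1 : ℝ) else 0) :
    (zstar 1 = 1 ∧ ∀ t ∈ Finset.Icc 1 (2 ^ (D + 1) - 1), zstar t ∈ Set.Icc (0 : ℝ) 1) ∧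
    (∀ z : ℕ → ℝ, z 1 = 1 →
      (∀ t ∈ Finset.Icc 1 (2 ^ (D + 1) - 1), z t ∈ Set.Icc (0 : ℝ) 1) →
      (∀ t ∈ Finset.Icc 1 (2 ^ (D + 1) - 1), z t = zstar t) ∨
        ∑ t ∈ Finset.Icc 1 (2 ^ (D + 1) - 1), z t * reward s t
          < ∑ t ∈ Finset.Icc 1 (2 ^ (D + 1) - 1), zstar t * reward s t) := by
  have hz1 : zstar 1 = 1 := by
    rw [hzstar, if_pos ⟨0, Nat.zero_le D, rfl⟩]
  have sign : ∀ t ∈ Finset.Icc 1 (2 ^ (D + 1) - 1),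
      (zstar t = 1 ∧ 0 < reward s t) ∨ (zstar t = 0 ∧ reward s t < 0) := by
    intro t ht
    rw [Finset.mem_Icc] at ht
    by_cases h1 : t = 1
    · subst h1
      left
      exact ⟨hz1, by rw [show reward s 1 = 1 by rw [reward]]; norm_num⟩
    · have ht2 : 2 ≤ t := by omega
      set d := Nat.log 2 t with hd
      have hd1 : 2 ^ d ≤ t := Nat.pow_log_le_self 2 (by omega)
      have hd2 : t < 2 ^ (d + 1) := Nat.lt_pow_succ_log_self (by norm_num) t
      have hdd : 1 ≤ d := by
        by_contra h
        have : d = 0 := by omega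
        rw [this] at hd2
        norm_num at hd2
        omega
      have hdD : d ≤ D := by
        have h2 : t < 2 ^ (D + 1) := by
          have : 1 ≤ (2:ℕ) ^ (D + 1) := Nat.one_le_two_pow
          omega
        have := Nat.log_lt_of_lt_pow (show t ≠ 0 by omega) h2
        omega
      obtain ⟨hpos, hneg⟩ := key D hD s hs d hdd hdD t hd1 hd2
      by_cases hp : path s d = t
      · exact Or.inl ⟨by rw [hzstar, if_pos ⟨d, hdD, hp⟩], hpos hp⟩
      · refine Or.inr ⟨?_, hneg hp⟩
        rw [hzstar, if_neg]
        rintro ⟨d', _, hp'⟩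
        obtain ⟨b1, b2⟩ := path_bounds s d'
        rw [hp'] at b1 b2
        have : d' = d := by
          rw [hd]
          exact (Nat.log_eq_of_pow_le_of_lt_pow b1 b2).symm
        exact hp (this ▸ hp')
  refine ⟨⟨hz1, ?_⟩, ?_⟩
  · intro t _
    rw [hzstar]
    split <;> simp
  · intro z hz1' hzf
    by_cases hall : ∀ t ∈ Finset.Icc 1 (2 ^ (D + 1) - 1), z t = zstar t
    · exact Or.inl hall
    · right
      push_neg at hall
      obtain ⟨t₀, ht₀, hne⟩ := hall
      apply Finset.sum_lt_sum
      · intro t ht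
        obtain ⟨hl, hu⟩ := hzf t ht
        rcases sign t ht with ⟨h1, h2⟩ | ⟨h1, h2⟩ <;> rw [h1] <;> nlinarith
      · refine ⟨t₀, ht₀, ?_⟩
        obtain ⟨hl, hu⟩ := hzf t₀ ht₀
        rcases sign t₀ ht₀ with ⟨h1, h2⟩ | ⟨h1, h2⟩ <;> rw [h1] at hne ⊢
        · have : z t₀ < 1 := lt_of_le_of_ne hu hne
          nlinarith
        · have : 0 < z t₀ := lt_of_le_of_ne hl (Ne.symm hne)
          nlinarith
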